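/- If A is a totally unimodular matrix (every square subdeterminant is 0, 1 or −1) and b is an integral vector, then every vertex of the polyhedron P = {x : Ax ≤ b, x ≥ 0} is integral. -/

import Mathlib

open Matrix Filter Topology Module Submodule

lemma aux_ker (m n : ℕ) (A : Matrix (Fin m) (Fin n) ℝ) (b : Fin m → ℝ) (x : Fin n → ℝ)
    (hx : x ∈ Set.extremePoints ℝ {x : Fin n → ℝ | A.mulVec x ≤ b ∧ 0 ≤ x})
    (v : Fin n → ℝ) (hv1 : ∀ i, A.mulVec x i = b i → A i ⬝ᵥ v = 0)
    (hv2 : ∀ j, x j = 0 → v j = 0) : v = 0 := by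
  rw [mem_extremePoints] at hx
  obtain ⟨⟨hxb, hx0⟩, hext⟩ := hx
  have hmem : ∀ᶠ ε in 𝓝[>] (0:ℝ),
      (x + ε • v ∈ {x : Fin n → ℝ | A.mulVec x ≤ b ∧ 0 ≤ x} ∧
       x - ε • v ∈ {x : Fin n → ℝ | A.mulVec x ≤ b ∧ 0 ≤ x}) := by
    have hrow : ∀ i : Fin m, ∀ᶠ ε in 𝓝[>] (0:ℝ),
        A.mulVec x i + ε * A.mulVec v i ≤ b i ∧ A.mulVec x i - ε * A.mulVec v i ≤ b i := by
      intro i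
      rcases eq_or_lt_of_le (hxb i) with heq | hlt
      · have h0 : A.mulVec v i = 0 := by
          have := hv1 i heq
          simpa [Matrix.mulVec, dotProduct] using this
        filter_upwards with ε
        simp [h0, hxb i]
      · have ht : Tendsto (fun ε : ℝ => A.mulVec x i + ε * A.mulVec v i) (𝓝[>] 0)
            (𝓝 (A.mulVec x i)) := by
          have : Tendsto (fun ε : ℝ => A.mulVec x i + ε * A.mulVec v i) (𝓝 0)
              (𝓝 (A.mulVec x i + 0 * A.mulVec v i)) := by
            apply Tendsto.add tendsto_const_nhds
            exact (tendsto_id.mul tendsto_const_nhds)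
          simpa using this.mono_left nhdsWithin_le_nhds
        have ht' : Tendsto (fun ε : ℝ => A.mulVec x i - ε * A.mulVec v i) (𝓝[>] 0)
            (𝓝 (A.mulVec x i)) := by
          have : Tendsto (fun ε : ℝ => A.mulVec x i - ε * A.mulVec v i) (𝓝 0)
              (𝓝 (A.mulVec x i - 0 * A.mulVec v i)) := by
            apply Tendsto.sub tendsto_const_nhds
            exact (tendsto_id.mul tendsto_const_nhds)
          simpa using this.mono_left nhdsWithin_le_nhds
        exact ((ht.eventually_lt_const hlt).and (ht'.eventually_lt_const hlt)).mono
          fun ε hε => ⟨hε.1.le, hε.2.le⟩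
    have hcol : ∀ j : Fin n, ∀ᶠ ε in 𝓝[>] (0:ℝ),
        0 ≤ x j + ε * v j ∧ 0 ≤ x j - ε * v j := by
      intro j
      rcases eq_or_lt_of_le (hx0 j) with heq | hlt
      · have h0 : v j = 0 := hv2 j heq.symm
        filter_upwards with ε
        simp [h0, ← heq]
      · have ht : Tendsto (fun ε : ℝ => x j + ε * v j) (𝓝[>] 0) (𝓝 (x j)) := by
          have : Tendsto (fun ε : ℝ => x j + ε * v j) (𝓝 0) (𝓝 (x j + 0 * v j)) :=
            Tendsto.add tendsto_const_nhds (tendsto_id.mul tendsto_const_nhds)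
          simpa using this.mono_left nhdsWithin_le_nhds
        have ht' : Tendsto (fun ε : ℝ => x j - ε * v j) (𝓝[>] 0) (𝓝 (x j)) := by
          have : Tendsto (fun ε : ℝ => x j - ε * v j) (𝓝 0) (𝓝 (x j - 0 * v j)) :=
            Tendsto.sub tendsto_const_nhds (tendsto_id.mul tendsto_const_nhds)
          simpa using this.mono_left nhdsWithin_le_nhds
        exact ((ht.eventually_const_lt hlt).and (ht'.eventually_const_lt hlt)).mono
          fun ε hε => ⟨hε.1.le, hε.2.le⟩
    have hr := (eventually_all).mpr hrow
    have hc := (eventually_all).mpr hcol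
    filter_upwards [hr, hc] with ε h1 h2
    refine ⟨⟨fun i => ?_, fun j => ?_⟩, fun i => ?_, fun j => ?_⟩
    · simpa [Matrix.mulVec_add, Matrix.mulVec_smul, smul_eq_mul] using (h1 i).1
    · simpa [smul_eq_mul] using (h2 j).1
    · simpa [Matrix.mulVec_sub, Matrix.mulVec_smul, smul_eq_mul] using (h1 i).2
    · simpa [smul_eq_mul] using (h2 j).2
  obtain ⟨ε, hε⟩ := (hmem.and (eventually_mem_nhdsWithin)).exists
  obtain ⟨⟨h1, h2⟩, (hεpos : ε ∈ Set.Ioi (0:ℝ))⟩ := hε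
  have := hext _ h1 _ h2 ⟨1/2, 1/2, by norm_num, by norm_num, by norm_num, by module⟩
  have h := this.1
  have hz : ε • v = 0 := by
    have := congrArg (fun y => y - x) h
    simpa [add_sub_cancel_left] using this
  simpa [(ne_of_gt (show (0:ℝ) < ε from hεpos))] using smul_eq_zero.mp hz

lemma aux_rows (n : ℕ) (ι : Type) [Fintype ι] (B : Matrix ι (Fin n) ℝ)
    (hker : ∀ v, B.mulVec v = 0 → v = 0) :
    ∃ f : Fin n → ι, Function.Injective f ∧ IsUnit (B.submatrix f id) := by
  classical
  have hkerbot : LinearMap.ker B.mulVecLin = ⊥ := by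
    rw [LinearMap.ker_eq_bot']
    intro v hv
    exact hker v hv
  have hrank : B.rank = n := by
    have := LinearMap.finrank_range_add_finrank_ker B.mulVecLin
    rw [hkerbot, finrank_bot] at this
    simpa [Matrix.rank, Module.finrank_pi] using this
  have hspan : span ℝ (Set.range B) = ⊤ := by
    apply Submodule.eq_top_of_finrank_eq
    change finrank ℝ (span ℝ (Set.range B.row)) = _
    rw [← Matrix.rank_eq_finrank_span_row, hrank, Module.finrank_pi]
    simp
  obtain ⟨t, hts, htspan, htli⟩ := exists_linearIndependent ℝ (Set.range B)
  rw [hspan] at htspan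
  haveI : Finite t := htli.finite
  haveI : Fintype t := Fintype.ofFinite _
  have hbasis : Basis t ℝ (Fin n → ℝ) := Basis.mk htli (by rw [Subtype.range_coe, htspan])
  have hcard : Fintype.card t = n := by
    have := Module.finrank_eq_card_basis hbasis
    simpa [Module.finrank_pi] using this.symm
  let e : Fin n ≃ t := (Fintype.equivFinOfCardEq hcard).symm
  have hchoice : ∀ w : t, ∃ r : ι, B r = (w : Fin n → ℝ) := fun w => hts w.2
  choose g hg using hchoice
  refine ⟨g ∘ e, ?_, ?_⟩
  · intro a b hab
    apply e.injective
    apply Subtype.ext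
    rw [← hg (e a), ← hg (e b)]
    simp only [Function.comp] at hab
    rw [hab]
  · rw [← Matrix.linearIndependent_rows_iff_isUnit]
    have : (fun i => (B.submatrix (g ∘ e) id) i) = (fun w : t => (w : Fin n → ℝ)) ∘ e := by
      funext k
      ext j
      simp only [Matrix.submatrix_apply, id, Function.comp]
      exact congrFun (hg (e k)) j
    change LinearIndependent ℝ (fun i => (B.submatrix (g ∘ e) id) i)
    rw [this]
    exact htli.comp e e.injective

lemma aux_int (n : ℕ) (M : Matrix (Fin n) (Fin n) ℝ) (x : Fin n → ℝ)
    (hM : IsUnit M) (hdet : M.det ∈ Set.range (SignType.cast : SignType → ℝ))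
    (hent : ∀ i j, ∃ z : ℤ, M i j = (z : ℝ))
    (hMx : ∀ k, ∃ z : ℤ, M.mulVec x k = (z : ℝ)) :
    ∀ i, ∃ z : ℤ, x i = (z : ℝ) := by
  classical
  choose N0 hN using hent
  set N : Matrix (Fin n) (Fin n) ℤ := Matrix.of N0 with hNdef
  have hMN : M = N.map (Int.cast : ℤ → ℝ) := by
    ext i j; simp [hN]; rfl
  have hdet0 : M.det ≠ 0 := by
    intro h
    exact (isUnit_iff_ne_zero.mp ((isUnit_iff_isUnit_det M).mp hM)) h
  have hdetN : IsUnit N.det := by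
    have hcast : ((N.det : ℤ) : ℝ) = M.det := by
      rw [hMN]
      have := RingHom.map_det (Int.castRingHom ℝ) N
      rw [RingHom.mapMatrix_apply] at this
      exact this
    obtain ⟨s, hs⟩ := hdet
    rcases s with _ | _ | _
    · exfalso; apply hdet0; rw [← hs]; simp
    · rw [Int.isUnit_iff]
      right
      have : ((N.det : ℤ) : ℝ) = -1 := by rw [hcast, ← hs]; simp
      exact_mod_cast this
    · rw [Int.isUnit_iff]
      left
      have : ((N.det : ℤ) : ℝ) = 1 := by rw [hcast, ← hs]; simp
      exact_mod_cast this
  choose d hd using hMx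
  set y : Fin n → ℤ := N⁻¹.mulVec d with hy
  have hNy : N.mulVec y = d := by
    rw [hy, Matrix.mulVec_mulVec, Matrix.mul_nonsing_inv N hdetN, Matrix.one_mulVec]
  have hMcast : M.mulVec (fun i => ((y i : ℤ) : ℝ)) = fun k => ((d k : ℤ) : ℝ) := by
    funext k
    have := congrFun hNy k
    rw [hMN]
    simp only [Matrix.mulVec, dotProduct, Matrix.map_apply] at this ⊢
    exact_mod_cast congrArg (Int.cast : ℤ → ℝ) this
  have hinj : Function.Injective M.mulVec := mulVec_injective_iff_isUnit.mpr hM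
  have hxy : x = fun i => ((y i : ℤ) : ℝ) := by
    apply hinj
    rw [hMcast]
    funext k
    exact hd k
  intro i
  exact ⟨y i, by rw [hxy]⟩

/-- If `A` is totally unimodular and `b` is integral, then every vertex (extreme point)
of the polyhedron `{x : A x ≤ b, x ≥ 0}` is integral. -/
theorem stmt4 (m n : ℕ) (A : Matrix (Fin m) (Fin n) ℝ) (hA : A.IsTotallyUnimodular)
    (b : Fin m → ℝ) (hb : ∀ i, ∃ z : ℤ, b i = (z : ℝ)) :
    ∀ x ∈ Set.extremePoints ℝ {x : Fin n → ℝ | A.mulVec x ≤ b ∧ 0 ≤ x},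
      ∀ i, ∃ z : ℤ, x i = (z : ℝ) := by
  classical
  intro x hx
  set ι : Type := {i : Fin m // A.mulVec x i = b i} ⊕ {j : Fin n // x j = 0} with hι
  let ρ : ι → Fin m ⊕ Fin n := Sum.map Subtype.val Subtype.val
  let B : Matrix ι (Fin n) ℝ := (fromRows A (1 : Matrix (Fin n) (Fin n) ℝ)).submatrix ρ id
  have hBrow1 : ∀ i : {i : Fin m // A.mulVec x i = b i}, B (Sum.inl i) = A i.1 := by
    intro i; rfl
  have hBrow2 : ∀ j : {j : Fin n // x j = 0},
      B (Sum.inr j) = (1 : Matrix (Fin n) (Fin n) ℝ) j.1 := by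
    intro j; rfl
  have hBTU : B.IsTotallyUnimodular := (hA.fromRows_one).submatrix ρ id
  have hBker : ∀ v, B.mulVec v = 0 → v = 0 := by
    intro v hv
    apply aux_ker m n A b x hx v
    · intro i hi
      have := congrFun hv (Sum.inl ⟨i, hi⟩)
      exact this
    · intro j hj
      have := congrFun hv (Sum.inr ⟨j, hj⟩)
      simp only [Matrix.mulVec, hBrow2, Pi.zero_apply] at this
      change (∑ k, (1 : Matrix (Fin n) (Fin n) ℝ) j k * v k) = 0 at this
      simpa [dotProduct, Matrix.one_apply] using this
  obtain ⟨f, hfinj, hfunit⟩ := aux_rows n ι B hBker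
  set M : Matrix (Fin n) (Fin n) ℝ := B.submatrix f id with hM
  have hdet : M.det ∈ Set.range (SignType.cast : SignType → ℝ) :=
    hBTU n f id hfinj Function.injective_id
  have hent : ∀ i j, ∃ z : ℤ, M i j = (z : ℝ) := by
    intro i j
    obtain ⟨s, hs⟩ := hBTU.apply (f i) j
    rcases s with _ | _ | _
    · exact ⟨0, by rw [show M i j = B (f i) j from rfl, ← hs]; simp⟩
    · exact ⟨-1, by rw [show M i j = B (f i) j from rfl, ← hs]; simp⟩
    · exact ⟨1, by rw [show M i j = B (f i) j from rfl, ← hs]; simp⟩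
  have hMx : ∀ k, ∃ z : ℤ, M.mulVec x k = (z : ℝ) := by
    intro k
    have hMk : M.mulVec x k = B (f k) ⬝ᵥ x := rfl
    rcases hfk : f k with i | j
    · obtain ⟨z, hz⟩ := hb i.1
      refine ⟨z, ?_⟩
      rw [hMk, hfk, hBrow1]
      have : A i.1 ⬝ᵥ x = A.mulVec x i.1 := rfl
      rw [this, i.2, hz]
    · refine ⟨0, ?_⟩
      rw [hMk, hfk, hBrow2]
      simp [dotProduct, Matrix.one_apply, j.2]
  exact aux_int n M x hfunit hdet hent hMx
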